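/- Iteratively removing low-degree vertices from a graph of arboricity α terminates in at most ⌈log_β n⌉ rounds: define G₁ = G, let V_i be the vertices of degree at most 2βα in G_i, and G_{i+1} = G_i minus V_i; then G_i has at most n/β^{i-1} vertices, and V = V₁ ∪ ... ∪ V_τ with τ = ⌈log_β n⌉. -/
import Mathlib


open Finset
open scoped Classical

/-- The remaining vertex set after `i` rounds of peeling off vertices of degree
at most `2βα` in the current induced subgraph: `peel G α β 0 = V`, and
`peel G α β (i+1)` consists of the vertices of `peel G α β i` whose degree inside
`peel G α β i` exceeds `2βα`. The level sets are `Vᵢ = peel (i-1) \ peel i`. -/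
noncomputable def peel {V : Type*} [Fintype V] (G : SimpleGraph V) (α β : ℝ) :
    ℕ → Finset V
  | 0 => Finset.univ
  | (i + 1) =>
      (peel G α β i).filter
        (fun v => 2 * β * α < (((peel G α β i).filter (G.Adj v)).card : ℝ))

/-- Iteratively removing low-degree vertices from a graph in which every induced
subgraph has average degree at most `2α` (e.g. a graph of arboricity `α`)
terminates in at most `⌈log_β n⌉` rounds: `peel G α β i` has at most `n / βⁱ`
vertices, `peel G α β ⌈log_β n⌉ = ∅`, and the level sets `Vᵢ` partition `V`. -/
theorem stmt_2 {V : Type*} [Fintype V] (G : SimpleGraph V) (α β : ℝ)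
    (hα : 0 ≤ α) (hβ : 2 ≤ β) (hn : 2 ≤ Fintype.card V)
    (havg : ∀ s : Finset V,
      (∑ v ∈ s, (((s.filter (G.Adj v)).card : ℝ))) ≤ 2 * α * (s.card : ℝ)) :
    (∀ i : ℕ, ((peel G α β i).card : ℝ) ≤ (Fintype.card V : ℝ) / β ^ i) ∧
    peel G α β ⌈Real.logb β (Fintype.card V)⌉₊ = ∅ ∧
    Finset.univ =
      (Finset.range ⌈Real.logb β (Fintype.card V)⌉₊).biUnion
        (fun i => peel G α β i \ peel G α β (i + 1)) := by
  have hβ0 : (0:ℝ) < β := by linarith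
  have hβ1 : (1:ℝ) < β := by linarith
  set n : ℝ := (Fintype.card V : ℝ) with hn'
  have hn2 : (2:ℝ) ≤ n := by rw [hn']; exact_mod_cast hn
  have hsub : ∀ i, peel G α β (i+1) ⊆ peel G α β i := fun i => filter_subset _ _
  -- strict step lemma
  have hstep : ∀ i, (peel G α β (i+1)).Nonempty →
      β * ((peel G α β (i+1)).card : ℝ) < ((peel G α β i).card : ℝ) := by
    intro i hne
    set s := peel G α β i with hs
    set P := peel G α β (i+1) with hP
    have hdeg : ∀ v ∈ P, 2 * β * α < ((s.filter (G.Adj v)).card : ℝ) := by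
      intro v hv
      rw [hP] at hv
      simp only [peel, mem_filter] at hv
      exact hv.2
    have h1 : ∑ _v ∈ P, (2 * β * α) < ∑ v ∈ P, ((s.filter (G.Adj v)).card : ℝ) :=
      Finset.sum_lt_sum_of_nonempty hne hdeg
    rw [Finset.sum_const, nsmul_eq_mul] at h1
    have h2 : ∑ v ∈ P, ((s.filter (G.Adj v)).card : ℝ)
        ≤ ∑ v ∈ s, ((s.filter (G.Adj v)).card : ℝ) :=
      Finset.sum_le_sum_of_subset_of_nonneg (hsub i) (by intros; positivity)
    have h3 := havg s
    have key : (P.card : ℝ) * (2 * β * α) < 2 * α * (s.card : ℝ) := by linarith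
    rcases eq_or_lt_of_le hα with hα0 | hαpos
    · exfalso; rw [← hα0] at key; simp at key
    · nlinarith [key, hαpos, (Nat.cast_nonneg P.card : (0:ℝ) ≤ (P.card : ℝ))]
  -- nonstrict cardinality bound
  have hbound : ∀ i : ℕ, ((peel G α β i).card : ℝ) ≤ n / β ^ i := by
    intro i
    induction i with
    | zero => simp [peel, hn']
    | succ i ih =>
      rcases Finset.eq_empty_or_nonempty (peel G α β (i+1)) with he | hne
      · rw [he]; simp only [card_empty, Nat.cast_zero]; positivity
      · have h' := hstep i hne
        have hpi : (0:ℝ) < β ^ i := pow_pos hβ0 i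
        rw [le_div_iff₀ (pow_pos hβ0 (i+1))]
        have hlt : β * ((peel G α β (i+1)).card : ℝ) < n / β ^ i := lt_of_lt_of_le h' ih
        calc ((peel G α β (i+1)).card : ℝ) * β ^ (i+1)
            = (β * ((peel G α β (i+1)).card : ℝ)) * β ^ i := by ring
          _ ≤ (n / β ^ i) * β ^ i := by
              apply mul_le_mul_of_nonneg_right (le_of_lt hlt) (le_of_lt hpi)
          _ = n := div_mul_cancel₀ _ (ne_of_gt hpi)
  have hτ1 : 1 ≤ ⌈Real.logb β n⌉₊ := by
    rw [Nat.one_le_ceil_iff]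
    exact Real.logb_pos hβ1 (by linarith)
  have hempty : peel G α β ⌈Real.logb β n⌉₊ = ∅ := by
    by_contra hne'
    have hne : (peel G α β ⌈Real.logb β n⌉₊).Nonempty :=
      Finset.nonempty_iff_ne_empty.mpr hne'
    obtain ⟨j, hj⟩ : ∃ j, ⌈Real.logb β n⌉₊ = j + 1 := ⟨⌈Real.logb β n⌉₊ - 1, by omega⟩
    rw [hj] at hne
    have hcard1 : (1:ℝ) ≤ ((peel G α β (j+1)).card : ℝ) := by
      have := Finset.card_pos.mpr hne
      exact_mod_cast this
    have h' := hstep j hne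
    have hle := hbound j
    have hpi : (0:ℝ) < β ^ j := pow_pos hβ0 j
    have hlt : β ^ (j+1) < n := by
      have h2 : β * ((peel G α β (j+1)).card : ℝ) < n / β ^ j := lt_of_lt_of_le h' hle
      have h1 : β * 1 ≤ β * ((peel G α β (j+1)).card : ℝ) :=
        mul_le_mul_of_nonneg_left hcard1 (le_of_lt hβ0)
      have h3 : β < n / β ^ j := by linarith
      have h4 := (lt_div_iff₀ hpi).mp h3
      calc β ^ (j+1) = β * β ^ j := by ring
        _ < n := h4
    have hge : n ≤ β ^ (j+1) := by
      have hlog : Real.logb β n ≤ ((j+1 : ℕ) : ℝ) := by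
        rw [← hj]; exact Nat.le_ceil _
      have h5 := Real.rpow_le_rpow_of_exponent_le (le_of_lt hβ1) hlog
      rw [Real.rpow_logb hβ0 (ne_of_gt hβ1) (by linarith), Real.rpow_natCast] at h5
      exact h5
    linarith
  refine ⟨hbound, hempty, ?_⟩
  ext v
  simp only [Finset.mem_biUnion, Finset.mem_range, Finset.mem_sdiff, Finset.mem_univ,
    true_iff]
  have hex : ∃ i, v ∉ peel G α β i :=
    ⟨⌈Real.logb β n⌉₊, by rw [hempty]; exact notMem_empty v⟩
  have hkspec : v ∉ peel G α β (Nat.find hex) := Nat.find_spec hex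
  have hk0 : Nat.find hex ≠ 0 := by
    intro h
    rw [h] at hkspec
    exact hkspec (mem_univ v)
  obtain ⟨m, hm⟩ : ∃ m, Nat.find hex = m + 1 := ⟨Nat.find hex - 1, by omega⟩
  have hmem : v ∈ peel G α β m := by
    by_contra hc
    exact absurd (Nat.find_min hex (by omega : m < Nat.find hex)) (by simpa using hc)
  have hkle : Nat.find hex ≤ ⌈Real.logb β n⌉₊ :=
    Nat.find_le (by rw [hempty]; exact notMem_empty v)
  refine ⟨m, by omega, hmem, ?_⟩
  rw [← hm]; exact hkspec
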